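/- Deterministic form of Theorem 1 (STIMULUS, non-convex rate O(1/T)). Let S ≥ 1, L > 0, 0 < η ≤ 1/(2L), q ≥ 1, and let f_1, …, f_S : ℝ^d → ℝ be differentiable with L-Lipschitz gradients, with f_1 bounded below by f* ∈ ℝ. Let (x_t)_{t∈ℕ} in ℝ^d, weight vectors λ_t in the probability simplex Δ_S, and vectors u_t^s ∈ ℝ^d be sequences such that, with d_t := Σ_{s=1}^S λ_t^s·u_t^s: (i) x_{t+1} = x_t − η·d_t for all t; (ii) ⟨u_t^s, d_t⟩ ≥ ‖d_t‖² for all t and s; (iii) ‖∇f_s(x_t) − u_t^s‖² ≤ (L²/q)·Σ_{i=q·⌊t/q⌋}^{t−1} ‖x_{i+1} − x_i‖² for all t and s (in particular u_t^s = ∇f_s(x_t) whenever q divides t). Then for every T ≥ 1: (1/T)·Σ_{t=0}^{T−1} ‖Σ_{s=1}^S λ_t^s·∇f_s(x_t)‖² ≤ (2·S·L²·η² + 2)·8·(f_1(x_0) − f*)/(η·T). -/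

import Mathlib

set_option maxHeartbeats 1000000


open scoped RealInnerProductSpace BigOperators

section Helpers

variable {E : Type*} [NormedAddCommGroup E] [InnerProductSpace ℝ E] [CompleteSpace E]

private lemma hasDerivAt_line' (f : E → ℝ) (hdiff : Differentiable ℝ f) (x v : E) (t : ℝ) :
    HasDerivAt (fun t : ℝ => f (x + t • v)) ⟪gradient f (x + t • v), v⟫ t := by
  have h1 : HasFDerivAt f (InnerProductSpace.toDual ℝ E (gradient f (x + t • v))) (x + t • v) :=
    hasGradientAt_iff_hasFDerivAt.mp (hdiff _).hasGradientAt
  have hline : HasDerivAt (fun s : ℝ => x + s • v) v t := by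
    simpa using ((hasDerivAt_id t).smul_const v).const_add x
  exact h1.comp_hasDerivAt t hline

private lemma descent' (L : ℝ) (f : E → ℝ) (hdiff : Differentiable ℝ f)
    (hlip : ∀ a b : E, ‖gradient f a - gradient f b‖ ≤ L * ‖a - b‖) (x v : E) :
    f (x + v) ≤ f x + ⟪gradient f x, v⟫ + L / 2 * ‖v‖ ^ 2 := by
  set φ : ℝ → ℝ := fun t => f (x + t • v) - t * ⟪gradient f x, v⟫ - L / 2 * t ^ 2 * ‖v‖ ^ 2 with hφ
  have hd : ∀ t : ℝ, HasDerivAt φ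
      (⟪gradient f (x + t • v), v⟫ - ⟪gradient f x, v⟫ - L * t * ‖v‖ ^ 2) t := by
    intro t
    have h1 := hasDerivAt_line' f hdiff x v t
    have h2 : HasDerivAt (fun t : ℝ => t * ⟪gradient f x, v⟫) ⟪gradient f x, v⟫ t := by
      simpa using (hasDerivAt_id t).mul_const _
    have h3 : HasDerivAt (fun t : ℝ => L / 2 * t ^ 2 * ‖v‖ ^ 2) (L * t * ‖v‖ ^ 2) t := by
      have := ((hasDerivAt_pow 2 t).const_mul (L / 2)).mul_const (‖v‖ ^ 2)
      exact this.congr_deriv (by push_cast; ring)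
    exact (h1.sub h2).sub h3
  have hmono : AntitoneOn φ (Set.Icc 0 1) := by
    apply antitoneOn_of_deriv_nonpos (convex_Icc 0 1)
    · exact (Differentiable.continuous (fun t => (hd t).differentiableAt)).continuousOn
    · intro t ht
      exact (hd t).differentiableAt.differentiableWithinAt
    · intro t ht
      rw [interior_Icc] at ht
      rw [(hd t).deriv]
      have hcs : ⟪gradient f (x + t • v) - gradient f x, v⟫ ≤ L * t * ‖v‖ ^ 2 := by
        calc ⟪gradient f (x + t • v) - gradient f x, v⟫
            ≤ ‖gradient f (x + t • v) - gradient f x‖ * ‖v‖ := real_inner_le_norm _ _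
          _ ≤ (L * ‖(x + t • v) - x‖) * ‖v‖ := by
              gcongr; exact hlip _ _
          _ = L * t * ‖v‖ ^ 2 := by
              simp [norm_smul, abs_of_pos ht.1]; ring
      have := inner_sub_left (𝕜 := ℝ) (gradient f (x + t • v)) (gradient f x) v
      linarith [hcs, this]
  have h01 : φ 1 ≤ φ 0 := hmono (by norm_num) (by norm_num) zero_le_one
  simp only [hφ, one_smul, zero_smul, add_zero, one_pow, one_mul, mul_zero, zero_mul,
    sub_zero] at h01
  nlinarith [h01]

private lemma window_sum' (a : ℕ → ℝ) (ha : ∀ i, 0 ≤ a i) (q T : ℕ) (hq : 1 ≤ q) :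
    ∑ t ∈ Finset.range T, ∑ i ∈ Finset.Ico (q * (t / q)) t, a i
      ≤ (q : ℝ) * ∑ i ∈ Finset.range T, a i := by
  have key : ∑ t ∈ Finset.range T, ∑ i ∈ Finset.Ico (q * (t / q)) t, a i
      = ∑ t ∈ Finset.range T, ∑ i ∈ Finset.range T,
          (if i ∈ Finset.Ico (q * (t / q)) t then a i else 0) := by
    apply Finset.sum_congr rfl
    intro t ht
    rw [Finset.sum_ite_mem]
    congr 1
    rw [Finset.inter_eq_right.mpr]
    intro i hi
    simp only [Finset.mem_Ico] at hi
    simp only [Finset.mem_range] at ht ⊢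
    omega
  rw [key, Finset.sum_comm]
  have hbound : ∀ i ∈ Finset.range T,
      ∑ t ∈ Finset.range T, (if i ∈ Finset.Ico (q * (t / q)) t then a i else 0)
        ≤ (q : ℝ) * a i := by
    intro i _
    rw [← Finset.sum_filter]
    have hsub : (Finset.range T).filter (fun t => i ∈ Finset.Ico (q * (t / q)) t)
        ⊆ Finset.Ico (i + 1) (i + q) := by
      intro t ht
      simp only [Finset.mem_filter, Finset.mem_range, Finset.mem_Ico] at ht ⊢
      have h1 : q * (t / q) ≤ i := ht.2.1
      have h2 : i < t := ht.2.2
      have h3 : t < q * (t / q) + q := Nat.lt_mul_div_succ t hq |>.trans_le (by ring_nf; omega)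
      omega
    calc ∑ t ∈ (Finset.range T).filter (fun t => i ∈ Finset.Ico (q * (t / q)) t), a i
        ≤ ∑ t ∈ Finset.Ico (i + 1) (i + q), a i :=
          Finset.sum_le_sum_of_subset_of_nonneg hsub (fun _ _ _ => ha i)
      _ = ((i + q) - (i + 1) : ℕ) * a i := by rw [Finset.sum_const, Nat.card_Ico]; simp
      _ ≤ (q : ℝ) * a i := by
          apply mul_le_mul_of_nonneg_right _ (ha i)
          have : (i + q) - (i + 1) = q - 1 := by omega
          rw [this]
          exact_mod_cast Nat.cast_le.mpr (Nat.sub_le q 1)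
  calc ∑ i ∈ Finset.range T, ∑ t ∈ Finset.range T,
        (if i ∈ Finset.Ico (q * (t / q)) t then a i else 0)
      ≤ ∑ i ∈ Finset.range T, (q : ℝ) * a i := Finset.sum_le_sum hbound
    _ = (q : ℝ) * ∑ i ∈ Finset.range T, a i := by rw [Finset.mul_sum]

end Helpers

/-- Deterministic form of Theorem 1: O(1/T) Pareto-stationarity rate of STIMULUS
in the non-convex setting. -/
theorem stimulus_nonconvex_rate {dim : ℕ} (S : ℕ) (hS : 1 ≤ S) (L η : ℝ)
    (hL : 0 < L) (hη0 : 0 < η) (hη : η ≤ 1 / (2 * L)) (q : ℕ) (hq : 1 ≤ q)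
    (f : Fin S → EuclideanSpace ℝ (Fin dim) → ℝ) (fstar : ℝ)
    (hdiff : ∀ s, Differentiable ℝ (f s))
    (hlip : ∀ s, ∀ x y : EuclideanSpace ℝ (Fin dim),
      ‖gradient (f s) x - gradient (f s) y‖ ≤ L * ‖x - y‖)
    (hbdd : ∀ y, fstar ≤ f ⟨0, hS⟩ y)
    (x : ℕ → EuclideanSpace ℝ (Fin dim))
    (lam : ℕ → Fin S → ℝ)
    (hlam_nonneg : ∀ t s, 0 ≤ lam t s)
    (hlam_sum : ∀ t, ∑ s : Fin S, lam t s = 1)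
    (u : ℕ → Fin S → EuclideanSpace ℝ (Fin dim))
    (dvec : ℕ → EuclideanSpace ℝ (Fin dim))
    (hdvec : ∀ t, dvec t = ∑ s : Fin S, lam t s • u t s)
    (hx : ∀ t, x (t + 1) = x t - η • dvec t)
    (hinner : ∀ t s, ⟪u t s, dvec t⟫ ≥ ‖dvec t‖ ^ 2)
    (herr : ∀ t s, ‖gradient (f s) (x t) - u t s‖ ^ 2
      ≤ (L ^ 2 / (q : ℝ)) * ∑ i ∈ Finset.Ico (q * (t / q)) t, ‖x (i + 1) - x i‖ ^ 2) :
    ∀ T : ℕ, 1 ≤ T →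
      (1 / (T : ℝ)) * ∑ t ∈ Finset.range T,
          ‖∑ s : Fin S, lam t s • gradient (f s) (x t)‖ ^ 2
        ≤ (2 * (S : ℝ) * L ^ 2 * η ^ 2 + 2) * 8 * (f ⟨0, hS⟩ (x 0) - fstar) / (η * T) := by
  intro T hT
  set s0 : Fin S := ⟨0, hS⟩
  have hLη : L * η ≤ 1 / 2 := by
    rw [le_div_iff₀ (by positivity)] at hη
    nlinarith
  have hqpos : (0:ℝ) < q := by exact_mod_cast hq
  have hTpos : (0:ℝ) < T := by exact_mod_cast hT
  -- step norm
  have hstep : ∀ i, ‖x (i + 1) - x i‖ ^ 2 = η ^ 2 * ‖dvec i‖ ^ 2 := by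
    intro i
    rw [hx i]
    have h1 : x i - η • dvec i - x i = -(η • dvec i) := by abel
    rw [h1, norm_neg, norm_smul]
    simp [abs_of_pos hη0]
    ring
  -- error bound in terms of dvec
  have herr' : ∀ t s, ‖gradient (f s) (x t) - u t s‖ ^ 2
      ≤ (L ^ 2 * η ^ 2 / q) * ∑ i ∈ Finset.Ico (q * (t / q)) t, ‖dvec i‖ ^ 2 := by
    intro t s
    calc ‖gradient (f s) (x t) - u t s‖ ^ 2
        ≤ (L ^ 2 / (q : ℝ)) * ∑ i ∈ Finset.Ico (q * (t / q)) t, ‖x (i + 1) - x i‖ ^ 2 :=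
          herr t s
      _ = (L ^ 2 * η ^ 2 / q) * ∑ i ∈ Finset.Ico (q * (t / q)) t, ‖dvec i‖ ^ 2 := by
          simp_rw [hstep]
          rw [← Finset.mul_sum]
          ring
  -- descent step
  have hdesc : ∀ t, f s0 (x (t + 1)) ≤ f s0 (x t) - (η / 4) * ‖dvec t‖ ^ 2
      + (η / 2) * ‖gradient (f s0) (x t) - u t s0‖ ^ 2 := by
    intro t
    have h := descent' L (f s0) (hdiff s0) (hlip s0) (x t) (-(η • dvec t))
    have hx' : x (t + 1) = x t + -(η • dvec t) := by rw [hx t]; abel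
    rw [← hx'] at h
    set g := gradient (f s0) (x t) with hg
    set d := dvec t with hd
    set e := g - u t s0 with he
    have hie : ⟪g, -(η • d)⟫ = -(η * ⟪g, d⟫) := by
      rw [inner_neg_right, real_inner_smul_right]
    have hgd : ⟪g, d⟫ = ⟪u t s0, d⟫ + ⟪e, d⟫ := by
      rw [he, inner_sub_left]; ring
    have h1 : ⟪u t s0, d⟫ ≥ ‖d‖ ^ 2 := hinner t s0
    have h2 : -(‖e‖ * ‖d‖) ≤ ⟪e, d⟫ := by
      have := real_inner_le_norm (-e) d
      rw [inner_neg_left, norm_neg] at this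
      linarith
    have h3 : ‖e‖ * ‖d‖ ≤ (‖e‖ ^ 2 + ‖d‖ ^ 2) / 2 := by
      nlinarith [sq_nonneg (‖e‖ - ‖d‖)]
    have hnv : ‖-(η • d)‖ ^ 2 = η ^ 2 * ‖d‖ ^ 2 := by
      rw [norm_neg, norm_smul]
      simp [abs_of_pos hη0]
      ring
    rw [hie, hnv] at h
    have hgd2 : ⟪g, d⟫ ≥ ‖d‖ ^ 2 - (‖e‖ ^ 2 + ‖d‖ ^ 2) / 2 := by
      rw [hgd]; linarith
    have hmul : η * ⟪g, d⟫ ≥ η * (‖d‖ ^ 2 - (‖e‖ ^ 2 + ‖d‖ ^ 2) / 2) :=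
      mul_le_mul_of_nonneg_left hgd2 hη0.le
    have hLq : L / 2 * (η ^ 2 * ‖d‖ ^ 2) ≤ η / 4 * ‖d‖ ^ 2 := by
      nlinarith [sq_nonneg ‖d‖, norm_nonneg d]
    nlinarith [h, hmul, hLq]
  -- telescoping
  set D : ℝ := ∑ t ∈ Finset.range T, ‖dvec t‖ ^ 2 with hD
  have hD0 : 0 ≤ D := Finset.sum_nonneg fun _ _ => sq_nonneg _
  set Er : ℝ := ∑ t ∈ Finset.range T, ‖gradient (f s0) (x t) - u t s0‖ ^ 2 with hEr
  have htel : f s0 (x T) ≤ f s0 (x 0) - (η / 4) * D + (η / 2) * Er := by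
    have hsum : ∑ t ∈ Finset.range T, (f s0 (x (t + 1)) - f s0 (x t))
        = f s0 (x T) - f s0 (x 0) := Finset.sum_range_sub (fun t => f s0 (x t)) T
    have hle : ∑ t ∈ Finset.range T, (f s0 (x (t + 1)) - f s0 (x t))
        ≤ ∑ t ∈ Finset.range T,
          (-(η / 4) * ‖dvec t‖ ^ 2 + (η / 2) * ‖gradient (f s0) (x t) - u t s0‖ ^ 2) :=
      Finset.sum_le_sum fun t _ => by linarith [hdesc t]
    rw [hsum] at hle
    rw [Finset.sum_add_distrib, ← Finset.mul_sum, ← Finset.mul_sum] at hle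
    linarith
  -- bound Er
  have hwin := window_sum' (fun i => ‖dvec i‖ ^ 2) (fun i => sq_nonneg _) q T hq
  have hEr_bound : Er ≤ L ^ 2 * η ^ 2 * D := by
    have h1 : Er ≤ ∑ t ∈ Finset.range T,
        (L ^ 2 * η ^ 2 / q) * ∑ i ∈ Finset.Ico (q * (t / q)) t, ‖dvec i‖ ^ 2 :=
      Finset.sum_le_sum fun t _ => herr' t s0
    rw [← Finset.mul_sum] at h1
    calc Er ≤ (L ^ 2 * η ^ 2 / q) * ∑ t ∈ Finset.range T,
          ∑ i ∈ Finset.Ico (q * (t / q)) t, ‖dvec i‖ ^ 2 := h1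
      _ ≤ (L ^ 2 * η ^ 2 / q) * ((q : ℝ) * D) := by
          apply mul_le_mul_of_nonneg_left hwin (by positivity)
      _ = L ^ 2 * η ^ 2 * D := by field_simp
  have hL2η2 : L ^ 2 * η ^ 2 ≤ 1 / 4 := by
    nlinarith [hLη, (mul_pos hL hη0).le]
  -- key bound on D
  have hkey : (η / 8) * D ≤ f s0 (x 0) - fstar := by
    have hb := hbdd (x T)
    have hm1 : (η / 2) * Er ≤ (η / 2) * (L ^ 2 * η ^ 2 * D) :=
      mul_le_mul_of_nonneg_left hEr_bound (by linarith)
    have hm2 : (η / 2) * (L ^ 2 * η ^ 2 * D) ≤ (η / 2) * (1 / 4 * D) :=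
      mul_le_mul_of_nonneg_left (mul_le_mul_of_nonneg_right hL2η2 hD0) (by linarith)
    nlinarith [htel, hb, hm1, hm2]
  have hC0 : 0 ≤ f s0 (x 0) - fstar := by linarith [hbdd (x 0)]
  -- per-step bound on the Pareto measure
  have hGt : ∀ t, ‖∑ s : Fin S, lam t s • gradient (f s) (x t)‖ ^ 2
      ≤ 2 * ((L ^ 2 * η ^ 2 / q) * ∑ i ∈ Finset.Ico (q * (t / q)) t, ‖dvec i‖ ^ 2)
        + 2 * ‖dvec t‖ ^ 2 := by
    intro t
    set B : ℝ := (L ^ 2 * η ^ 2 / q) * ∑ i ∈ Finset.Ico (q * (t / q)) t, ‖dvec i‖ ^ 2 with hB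
    have hB0 : 0 ≤ B := mul_nonneg (by positivity) (Finset.sum_nonneg fun _ _ => sq_nonneg _)
    set a : EuclideanSpace ℝ (Fin dim) := ∑ s : Fin S, lam t s • gradient (f s) (x t) with ha
    have hab : a - dvec t = ∑ s : Fin S, lam t s • (gradient (f s) (x t) - u t s) := by
      rw [hdvec, ha, ← Finset.sum_sub_distrib]
      exact Finset.sum_congr rfl fun s _ => by rw [smul_sub]
    have h1 : ‖a - dvec t‖ ≤ Real.sqrt B := by
      rw [hab]
      calc ‖∑ s : Fin S, lam t s • (gradient (f s) (x t) - u t s)‖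
          ≤ ∑ s : Fin S, ‖lam t s • (gradient (f s) (x t) - u t s)‖ := norm_sum_le _ _
        _ = ∑ s : Fin S, lam t s * ‖gradient (f s) (x t) - u t s‖ := by
            exact Finset.sum_congr rfl fun s _ => by
              rw [norm_smul, Real.norm_eq_abs, abs_of_nonneg (hlam_nonneg t s)]
        _ ≤ ∑ s : Fin S, lam t s * Real.sqrt B := by
            apply Finset.sum_le_sum
            intro s _
            apply mul_le_mul_of_nonneg_left _ (hlam_nonneg t s)
            rw [show Real.sqrt B = Real.sqrt B from rfl]
            have hsq : ‖gradient (f s) (x t) - u t s‖ ^ 2 ≤ B := herr' t s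
            calc ‖gradient (f s) (x t) - u t s‖
                = Real.sqrt (‖gradient (f s) (x t) - u t s‖ ^ 2) := by
                  rw [Real.sqrt_sq (norm_nonneg _)]
              _ ≤ Real.sqrt B := Real.sqrt_le_sqrt hsq
        _ = Real.sqrt B := by rw [← Finset.sum_mul, hlam_sum t, one_mul]
    have h2 : ‖a - dvec t‖ ^ 2 ≤ B := by
      calc ‖a - dvec t‖ ^ 2 ≤ Real.sqrt B ^ 2 := pow_le_pow_left₀ (norm_nonneg _) h1 2
        _ = B := Real.sq_sqrt hB0
    have h3 : ‖a‖ ≤ ‖a - dvec t‖ + ‖dvec t‖ := by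
      calc ‖a‖ = ‖(a - dvec t) + dvec t‖ := by rw [sub_add_cancel]
        _ ≤ ‖a - dvec t‖ + ‖dvec t‖ := norm_add_le _ _
    have h4 : ‖a‖ ^ 2 ≤ (‖a - dvec t‖ + ‖dvec t‖) ^ 2 := pow_le_pow_left₀ (norm_nonneg a) h3 2
    nlinarith [h2, h4, sq_nonneg (‖a - dvec t‖ - ‖dvec t‖)]
  -- sum the per-step bounds
  set G : ℝ := ∑ t ∈ Finset.range T, ‖∑ s : Fin S, lam t s • gradient (f s) (x t)‖ ^ 2 with hG
  have hGsum : G ≤ (2 * L ^ 2 * η ^ 2 + 2) * D := by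
    have h1 : G ≤ ∑ t ∈ Finset.range T,
        (2 * ((L ^ 2 * η ^ 2 / q) * ∑ i ∈ Finset.Ico (q * (t / q)) t, ‖dvec i‖ ^ 2)
          + 2 * ‖dvec t‖ ^ 2) :=
      Finset.sum_le_sum fun t _ => hGt t
    rw [Finset.sum_add_distrib, ← Finset.mul_sum, ← Finset.mul_sum, ← Finset.mul_sum,
      ← hD] at h1
    have h2 : (L ^ 2 * η ^ 2 / q) * ∑ t ∈ Finset.range T,
            ∑ i ∈ Finset.Ico (q * (t / q)) t, ‖dvec i‖ ^ 2
        ≤ L ^ 2 * η ^ 2 * D := by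
      calc (L ^ 2 * η ^ 2 / q) * ∑ t ∈ Finset.range T,
            ∑ i ∈ Finset.Ico (q * (t / q)) t, ‖dvec i‖ ^ 2
          ≤ (L ^ 2 * η ^ 2 / q) * ((q : ℝ) * D) :=
            mul_le_mul_of_nonneg_left hwin (by positivity)
        _ = L ^ 2 * η ^ 2 * D := by field_simp
    nlinarith [h1, h2]
  -- conclude
  have hS1 : (1:ℝ) ≤ S := by exact_mod_cast hS
  have h8 : D ≤ 8 * (f s0 (x 0) - fstar) / η := by
    rw [le_div_iff₀ hη0]
    nlinarith [hkey]
  have hfin : G ≤ (2 * (S : ℝ) * L ^ 2 * η ^ 2 + 2) * 8 * (f s0 (x 0) - fstar) / η := by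
    have hcoef : (2 * L ^ 2 * η ^ 2 + 2) ≤ (2 * (S : ℝ) * L ^ 2 * η ^ 2 + 2) := by
      nlinarith [hS1, mul_nonneg (sq_nonneg L) (sq_nonneg η)]
    calc G ≤ (2 * L ^ 2 * η ^ 2 + 2) * D := hGsum
      _ ≤ (2 * L ^ 2 * η ^ 2 + 2) * (8 * (f s0 (x 0) - fstar) / η) := by
          apply mul_le_mul_of_nonneg_left h8 (by positivity)
      _ ≤ (2 * (S : ℝ) * L ^ 2 * η ^ 2 + 2) * (8 * (f s0 (x 0) - fstar) / η) := by
          apply mul_le_mul_of_nonneg_right hcoef (by positivity)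
      _ = (2 * (S : ℝ) * L ^ 2 * η ^ 2 + 2) * 8 * (f s0 (x 0) - fstar) / η := by ring
  calc (1 / (T : ℝ)) * G
      ≤ (1 / (T : ℝ)) * ((2 * (S : ℝ) * L ^ 2 * η ^ 2 + 2) * 8 * (f s0 (x 0) - fstar) / η) :=
        mul_le_mul_of_nonneg_left hfin (by positivity)
    _ = (2 * (S : ℝ) * L ^ 2 * η ^ 2 + 2) * 8 * (f s0 (x 0) - fstar) / (η * T) := by
        rw [one_div, inv_mul_eq_div, div_div]
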